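/- Construction B: for all integers N ≥ 2, T ≥ 1, and K = T·(N−1), there exists an (N,K) PIR scheme (with binary messages, L = 1 bit) whose storage cost α and download cost β satisfy α ≤ T and β ≤ (2^T − 1)/2^T. -/

import Mathlib

/- Shannon entropy framework for finitely-valued random variables on a finite
probability space, and the definition of an (N,K) private information retrieval
(PIR) scheme. -/

open scoped Classical
open Finset

/-- `prob p X a` is the probability that the random variable `X` takes the value `a`,
where `p` is the probability mass function on the finite sample space `Ω`. -/
noncomputable def prob {Ω α : Type} [Fintype Ω] (p : Ω → ℝ) (X : Ω → α) (a : α) : ℝ :=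
  ∑ ω : Ω, if X ω = a then p ω else 0

/-- Shannon entropy (natural base) of a random variable `X` on a finite sample space. -/
noncomputable def ent {Ω α : Type} [Fintype Ω] (p : Ω → ℝ) (X : Ω → α) : ℝ :=
  ∑ a ∈ Finset.univ.image X, Real.negMulLog (prob p X a)

/-- Conditional Shannon entropy `H(X | Y) = H(X, Y) - H(Y)`. -/
noncomputable def condEnt {Ω α β : Type} [Fintype Ω] (p : Ω → ℝ) (X : Ω → α) (Y : Ω → β) : ℝ :=
  ent p (fun ω => (X ω, Y ω)) - ent p Y

/-- An `(N, K)` private information retrieval scheme: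
`K` mutually independent messages `W` with entropy `L` each, stored contents `S` at `N`
servers (deterministic functions of the messages), a random key `F` independent of the
messages, queries `Q` (deterministic functions of `F`), answers `A` (deterministic
functions of the query and the stored content, with an answer function not depending on
the desired index), correctness and privacy. Messages/servers are indexed `0, …, K-1`
and `0, …, N-1` (paper index `i` corresponds to index `i - 1` here). -/
structure PIRScheme (N K : ℕ) where
  Ω : Type
  [finΩ : Fintype Ω]
  Msg : Type
  Sto : Type
  Qry : Type
  Ans : Type
  Key : Type
  p : Ω → ℝ
  p_nonneg : ∀ ω, 0 ≤ p ω
  p_sum : ∑ ω : Ω, p ω = 1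
  L : ℝ
  L_pos : 0 < L
  W : Fin K → Ω → Msg
  S : Fin N → Ω → Sto
  F : Ω → Key
  Q : Fin K → Fin N → Ω → Qry
  A : Fin K → Fin N → Ω → Ans
  W_indep : ∀ w : Fin K → Msg,
    prob p (fun ω => (fun k => W k ω)) w = ∏ k : Fin K, prob p (W k) (w k)
  W_ent : ∀ k, ent p (W k) = L
  F_indep : ∀ (f : Key) (w : Fin K → Msg),
    prob p (fun ω => (F ω, fun k => W k ω)) (f, w)
      = prob p F f * prob p (fun ω => (fun k => W k ω)) w
  S_det : ∀ n : Fin N, ∃ g : (Fin K → Msg) → Sto, ∀ ω, S n ω = g (fun k => W k ω)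
  Q_det : ∀ (k : Fin K) (n : Fin N), ∃ g : Key → Qry, ∀ ω, Q k n ω = g (F ω)
  A_det : ∀ n : Fin N, ∃ φ : Qry → Sto → Ans, ∀ (k : Fin K) (ω : Ω), A k n ω = φ (Q k n ω) (S n ω)
  correct : ∀ k : Fin K, ∃ g : (Fin N → Ans) → (Fin N → Qry) → Msg,
    ∀ ω, W k ω = g (fun n => A k n ω) (fun n => Q k n ω)
  privacy : ∀ (n : Fin N) (k k' : Fin K) (q : Qry),
    prob p (Q k n) q = prob p (Q k' n) q

attribute [instance] PIRScheme.finΩ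

/-- The set of server (or message) indices `{i : i < m}`, i.e. paper indices `1, …, m`. -/
def finLt (N m : ℕ) : Finset (Fin N) := Finset.univ.filter (fun i => i.val < m)

/-- The set of server (or message) indices `{i : m ≤ i}`, i.e. paper indices `m+1, …, N`. -/
def finGe (N m : ℕ) : Finset (Fin N) := Finset.univ.filter (fun i => m ≤ i.val)

namespace PIRScheme

variable {N K : ℕ}

/-- Informational normalized storage cost `α = (1/(N L)) ∑ₙ H(Sₙ)`. -/
noncomputable def alpha (s : PIRScheme N K) : ℝ :=
  (1 / (N * s.L)) * ∑ n : Fin N, ent s.p (s.S n)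

/-- Informational normalized download cost for desired message `k`:
`(1/(N L)) ∑ₙ H(Aₙ^[k] | Q₁^[k], …, Q_N^[k])`.  The download cost `β` of the scheme is
`betaAt` at the first message. -/
noncomputable def betaAt (s : PIRScheme N K) (k : Fin K) : ℝ :=
  (1 / (N * s.L)) *
    ∑ n : Fin N, condEnt s.p (s.A k n) (fun ω => (fun n' : Fin N => s.Q k n' ω))

/-- The joint random variable `S_B = (Sₙ : n ∈ B)`. -/
noncomputable def jointS (s : PIRScheme N K) (B : Finset (Fin N)) : s.Ω → (B → s.Sto) :=
  fun ω i => s.S i.1 ω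

/-- The joint random variable `A_B^[k] = (Aₙ^[k] : n ∈ B)`. -/
noncomputable def jointA (s : PIRScheme N K) (k : Fin K) (B : Finset (Fin N)) :
    s.Ω → (B → s.Ans) :=
  fun ω i => s.A k i.1 ω

/-- The joint random variable `W_C = (Wₖ : k ∈ C)`. -/
noncomputable def jointW (s : PIRScheme N K) (C : Finset (Fin K)) : s.Ω → (C → s.Msg) :=
  fun ω i => s.W i.1 ω

/-- A scheme is symmetric if
`H(S_A, A_B^[k] | F, W_C) = H(S_{π(A)}, A_{π(B)}^[π'(k)] | F, W_{π'(C)})` for all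
permutations `π` of the servers and `π'` of the messages. -/
def Symmetric (s : PIRScheme N K) : Prop :=
  ∀ (A B : Finset (Fin N)) (C : Finset (Fin K)) (k : Fin K)
    (π : Equiv.Perm (Fin N)) (π' : Equiv.Perm (Fin K)),
    condEnt s.p (fun ω => (s.jointS A ω, s.jointA k B ω)) (fun ω => (s.F ω, s.jointW C ω))
      = condEnt s.p (fun ω => (s.jointS (A.image ⇑π) ω, s.jointA (π' k) (B.image ⇑π) ω))
          (fun ω => (s.F ω, s.jointW (C.image ⇑π') ω))

end PIRScheme


/- ===================== Auxiliary general entropy lemmas ===================== -/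

section AuxEntropy

lemma prob_uniform_count {Ω B : Type} [Fintype Ω] (X : Ω → B) (b : B) :
    prob (fun _ => ((Fintype.card Ω : ℝ))⁻¹) X b
      = ((Finset.univ.filter (fun ω => X ω = b)).card : ℝ) * (Fintype.card Ω : ℝ)⁻¹ := by
  rw [prob]
  rw [← Finset.sum_filter]
  simp [Finset.sum_const, mul_comm]

lemma fiber_card_eq {Ω B : Type} [Fintype Ω] [Fintype B] (X : Ω → B)
    (h : ∀ t t' : B, ∃ g : Ω ≃ Ω, ∀ ω, X ω = t → X (g ω) = t') (t : B) :
    (Finset.univ.filter (fun ω => X ω = t)).card * Fintype.card B = Fintype.card Ω := by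
  have hle : ∀ t t' : B, (Finset.univ.filter (fun ω => X ω = t)).card
      ≤ (Finset.univ.filter (fun ω => X ω = t')).card := by
    intro t t'
    obtain ⟨g, hg⟩ := h t t'
    apply Finset.card_le_card_of_injOn g
    · intro ω hω
      have hω' : X ω = t := by simpa using hω
      simpa using hg ω hω'
    · exact g.injective.injOn
  have heq : ∀ t' : B, (Finset.univ.filter (fun ω => X ω = t')).card
      = (Finset.univ.filter (fun ω => X ω = t)).card :=
    fun t' => le_antisymm (hle t' t) (hle t t')
  have hsum : (Finset.univ : Finset Ω).card
      = ∑ t' : B, (Finset.univ.filter (fun ω => X ω = t')).card :=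
    Finset.card_eq_sum_card_fiberwise (fun ω _ => Finset.mem_univ (X ω))
  rw [show Fintype.card Ω = ∑ t' : B, (Finset.univ.filter (fun ω => X ω = t')).card from hsum,
    Finset.sum_congr rfl (fun t' _ => heq t'), Finset.sum_const, Fintype.card, smul_eq_mul,
    mul_comm]

lemma prob_uniform_of_trans {Ω B : Type} [Fintype Ω] [Fintype B] [Nonempty Ω] (X : Ω → B)
    (h : ∀ t t' : B, ∃ g : Ω ≃ Ω, ∀ ω, X ω = t → X (g ω) = t') (b : B) :
    prob (fun _ => ((Fintype.card Ω : ℝ))⁻¹) X b = (Fintype.card B : ℝ)⁻¹ := by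
  have hB : (0 : ℕ) < Fintype.card B := Fintype.card_pos_iff.mpr ⟨X (Classical.arbitrary Ω)⟩
  have hΩ : (0 : ℕ) < Fintype.card Ω := Fintype.card_pos
  have hfc := fiber_card_eq X h b
  rw [prob_uniform_count]
  have hcast : ((Finset.univ.filter (fun ω => X ω = b)).card : ℝ) * (Fintype.card B : ℝ)
      = (Fintype.card Ω : ℝ) := by exact_mod_cast congrArg (Nat.cast : ℕ → ℝ) hfc
  field_simp
  linarith [hcast]

lemma ent_of_trans {Ω B : Type} [Fintype Ω] [Fintype B] [Nonempty Ω] (X : Ω → B)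
    (h : ∀ t t' : B, ∃ g : Ω ≃ Ω, ∀ ω, X ω = t → X (g ω) = t') :
    ent (fun _ => ((Fintype.card Ω : ℝ))⁻¹) X = Real.log (Fintype.card B) := by
  have hB : (0 : ℕ) < Fintype.card B := Fintype.card_pos_iff.mpr ⟨X (Classical.arbitrary Ω)⟩
  have hΩ : (0 : ℕ) < Fintype.card Ω := Fintype.card_pos
  have himg : Finset.univ.image X = (Finset.univ : Finset B) := by
    apply Finset.eq_univ_iff_forall.mpr
    intro b
    have hfc := fiber_card_eq X h b
    have hpos : 0 < (Finset.univ.filter (fun ω => X ω = b)).card := by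
      by_contra hc
      push_neg at hc
      interval_cases h' : (Finset.univ.filter (fun ω => X ω = b)).card
      · omega
    obtain ⟨ω, hω⟩ := Finset.card_pos.mp hpos
    simp only [Finset.mem_filter] at hω
    exact Finset.mem_image.mpr ⟨ω, Finset.mem_univ ω, hω.2⟩
  rw [ent, himg]
  rw [Finset.sum_congr rfl (fun b _ => by rw [prob_uniform_of_trans X h b])]
  rw [Finset.sum_const]
  have hnml : Real.negMulLog ((Fintype.card B : ℝ))⁻¹
      = (Fintype.card B : ℝ)⁻¹ * Real.log (Fintype.card B) := by
    rw [Real.negMulLog, Real.log_inv]; ring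
  rw [show (Finset.univ : Finset B).card = Fintype.card B from rfl, hnml, nsmul_eq_mul]
  have hBne : (Fintype.card B : ℝ) ≠ 0 := by positivity
  field_simp

lemma ent_comp_inj {Ω B C : Type} [Fintype Ω] (p : Ω → ℝ) (X : Ω → B) (g : B → C)
    (hg : Function.Injective g) :
    ent p (fun ω => g (X ω)) = ent p X := by
  have hprob : ∀ b : B, prob p (fun ω => g (X ω)) (g b) = prob p X b := by
    intro b
    unfold prob
    exact Finset.sum_congr rfl (fun ω _ => by simp [hg.eq_iff])
  rw [ent, ent]
  have himg : (Finset.univ.image fun ω => g (X ω)) = (Finset.univ.image X).image g := by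
    rw [Finset.image_image]; rfl
  rw [himg, Finset.sum_image (fun b _ b' _ hbb => hg hbb)]
  exact Finset.sum_congr rfl (fun b _ => by rw [hprob b])

lemma ent_eq_sum_univ {Ω B : Type} [Fintype Ω] [Fintype B] (p : Ω → ℝ) (X : Ω → B) :
    ent p X = ∑ b : B, Real.negMulLog (prob p X b) := by
  rw [ent]
  apply Finset.sum_subset (Finset.subset_univ _)
  intro b _ hb
  have hzero : prob p X b = 0 := by
    unfold prob
    apply Finset.sum_eq_zero
    intro ω _
    rw [if_neg]
    intro hXb
    exact hb (Finset.mem_image.mpr ⟨ω, Finset.mem_univ ω, hXb⟩)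
  rw [hzero, Real.negMulLog_zero]

lemma zmod2_sum {M : Type} [AddCommMonoid M] (f : ZMod 2 → M) :
    ∑ a : ZMod 2, f a = f 0 + f 1 := by
  have huniv : (Finset.univ : Finset (ZMod 2)) = {0, 1} := by decide
  rw [huniv, Finset.sum_insert (by decide), Finset.sum_singleton]

lemma prob_pair_snd {γ δ B : Type} [Fintype γ] [Fintype δ] (g : δ → γ → B) (a : B) (v₀ : δ) :
    prob (fun _ => ((Fintype.card (γ × δ) : ℝ))⁻¹)
      (fun ω : γ × δ => (g ω.2 ω.1, ω.2)) (a, v₀)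
    = ((Finset.univ.filter (fun w : γ => g v₀ w = a)).card : ℝ)
        * (Fintype.card (γ × δ) : ℝ)⁻¹ := by
  rw [prob_uniform_count]
  congr 1
  norm_cast
  apply Finset.card_bij (fun ω _ => ω.1)
  · intro ω hω
    simp only [Finset.mem_filter, Finset.mem_univ, true_and, Prod.mk.injEq] at hω ⊢
    rw [← hω.2]
    exact hω.1
  · intro ω hω ω' hω' hee
    simp only [Finset.mem_filter, Finset.mem_univ, true_and, Prod.mk.injEq] at hω hω'
    exact Prod.ext hee (hω.2.trans hω'.2.symm)
  · intro w hw
    simp only [Finset.mem_filter, Finset.mem_univ, true_and, Prod.mk.injEq] at hw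
    refine ⟨(w, v₀), ?_, rfl⟩
    simp only [Finset.mem_filter, Finset.mem_univ, true_and, Prod.mk.injEq]
    exact ⟨hw, trivial⟩

lemma negMulLog_inv_pow (m : ℕ) :
    Real.negMulLog (((2:ℝ)^m)⁻¹) = ((2:ℝ)^m)⁻¹ * (m * Real.log 2) := by
  rw [Real.negMulLog, Real.log_inv, Real.log_pow]; ring

end AuxEntropy

/- ===================== Construction B ingredients ===================== -/

noncomputable def pirDot {m : ℕ} (q s : Fin m → ZMod 2) : ZMod 2 := ∑ i, q i * s i

def pirIdx {K : ℕ} (w : Fin K → ZMod 2) (t : ℕ) : ZMod 2 := if h : t < K then w ⟨t, h⟩ else 0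

/-- Stored content of server `n` (as an `ℕ` index): data servers `n < N-1` store their
block of `T` messages, the last server stores the `T` parity bits. -/
noncomputable def pirSto (N T : ℕ) (n : ℕ) (w : Fin (T * (N - 1)) → ZMod 2) :
    Fin T → ZMod 2 :=
  fun i => if n < N - 1 then pirIdx w (T * n + i)
    else ∑ j ∈ Finset.range (N - 1), pirIdx w (T * j + i)

def deltaVec (T : ℕ) (r : ℕ) : Fin T → ZMod 2 := fun i => if i.val = r then 1 else 0

/-- Query shift: server `k/T` gets the flipped vector, everyone else the plain one. -/
noncomputable def pirQv (N T : ℕ) (k : Fin (T * (N - 1))) (n : ℕ) : Fin T → ZMod 2 :=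
  if n = k.val / T then deltaVec T (k.val % T) else 0

lemma pirIdx_add {K : ℕ} (w d : Fin K → ZMod 2) (t : ℕ) :
    pirIdx (w + d) t = pirIdx w t + pirIdx d t := by
  unfold pirIdx; split <;> simp

lemma pirSto_add (N T : ℕ) (n : ℕ) (w d : Fin (T * (N - 1)) → ZMod 2) :
    pirSto N T n (w + d) = pirSto N T n w + pirSto N T n d := by
  funext i
  unfold pirSto
  split
  · simp [pirIdx_add]
  · simp [pirIdx_add, Finset.sum_add_distrib]

lemma pirDot_add_right {m : ℕ} (q s t : Fin m → ZMod 2) :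
    pirDot q (s + t) = pirDot q s + pirDot q t := by
  unfold pirDot; simp [mul_add, Finset.sum_add_distrib]

lemma pirDot_add_left {m : ℕ} (q r s : Fin m → ZMod 2) :
    pirDot (q + r) s = pirDot q s + pirDot r s := by
  unfold pirDot; simp [add_mul, Finset.sum_add_distrib]

lemma pirDot_zero_left {m : ℕ} (s : Fin m → ZMod 2) : pirDot 0 s = 0 := by
  unfold pirDot; simp

lemma pirDot_delta {T : ℕ} (r : ℕ) (hr : r < T) (s : Fin T → ZMod 2) :
    pirDot (deltaVec T r) s = s ⟨r, hr⟩ := by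
  unfold pirDot deltaVec
  rw [Finset.sum_eq_single ⟨r, hr⟩]
  · simp
  · intro i _ hi
    rw [if_neg, zero_mul]
    intro hv; exact hi (Fin.ext hv)
  · simp

/-- Surjectivity of the storage map onto `Fin T → ZMod 2`. -/
lemma pirSto_surj (N T : ℕ) (hN : 2 ≤ N) (hT : 1 ≤ T) (n : ℕ) (u : Fin T → ZMod 2) :
    ∃ d : Fin (T * (N - 1)) → ZMod 2, pirSto N T n d = u := by
  by_cases hn : n < N - 1
  · refine ⟨fun κ => if h2 : T * n ≤ κ.val ∧ κ.val < T * n + T then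
      u ⟨κ.val - T * n, by omega⟩ else 0, ?_⟩
    funext i
    unfold pirSto pirIdx
    rw [if_pos hn]
    have hlt : T * n + i.val < T * (N - 1) := by
      have h1 : n + 1 ≤ N - 1 := hn
      calc T * n + i.val < T * n + T := by omega
        _ = T * (n + 1) := by ring
        _ ≤ T * (N - 1) := Nat.mul_le_mul_left T h1
    rw [dif_pos hlt]
    beta_reduce
    rw [dif_pos (show T * n ≤ T * n + i.val ∧ T * n + i.val < T * n + T from ⟨by omega, by omega⟩)]
    congr 1
    apply Fin.ext
    simp
  · refine ⟨fun κ => if h2 : κ.val < T then u ⟨κ.val, h2⟩ else 0, ?_⟩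
    funext i
    unfold pirSto
    rw [if_neg hn]
    rw [Finset.sum_eq_single_of_mem 0 (Finset.mem_range.mpr (by omega))]
    · unfold pirIdx
      have hiK : (i : ℕ) < T * (N - 1) := by
        calc (i : ℕ) < T := i.isLt
          _ = T * 1 := (mul_one T).symm
          _ ≤ T * (N - 1) := Nat.mul_le_mul_left T (by omega)
      rw [Nat.mul_zero, Nat.zero_add, dif_pos hiK]
      beta_reduce
      rw [dif_pos i.isLt]
    · intro j hj hj0
      unfold pirIdx
      have hTle : T ≤ T * j + i.val := by
        have h1j : 1 ≤ j := Nat.one_le_iff_ne_zero.mpr hj0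
        calc T = T * 1 := (mul_one T).symm
          _ ≤ T * j := Nat.mul_le_mul_left T h1j
          _ ≤ T * j + i.val := Nat.le_add_right _ _
      split
      · beta_reduce
        simp only [Fin.val_mk]
        rw [dif_neg (by omega)]
      · rfl

/-- The correctness identity: the XOR of all answers is the desired message. -/
lemma pir_correct (N T : ℕ) (hN : 2 ≤ N) (hT : 1 ≤ T) (k : Fin (T * (N - 1)))
    (w : Fin (T * (N - 1)) → ZMod 2) (v : Fin T → ZMod 2) :
    w k = ∑ n : Fin N, pirDot (v + pirQv N T k n.val) (pirSto N T n.val w) := by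
  have hsplit : ∀ n : Fin N, pirDot (v + pirQv N T k n.val) (pirSto N T n.val w)
      = pirDot v (pirSto N T n.val w) + pirDot (pirQv N T k n.val) (pirSto N T n.val w) :=
    fun n => pirDot_add_left _ _ _
  rw [Finset.sum_congr rfl (fun n _ => hsplit n), Finset.sum_add_distrib]
  have h1 : ∑ n : Fin N, pirDot v (pirSto N T n.val w) = 0 := by
    have hrange : ∑ n : Fin N, pirDot v (pirSto N T n.val w)
        = ∑ n ∈ Finset.range N, pirDot v (pirSto N T n w) :=
      Finset.sum_range (fun n => pirDot v (pirSto N T n w)) |>.symm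
    rw [hrange]
    have hN' : Finset.range N = Finset.range ((N - 1) + 1) := by
      rw [Nat.sub_add_cancel (by omega)]
    rw [hN', Finset.sum_range_succ]
    have hdata : ∀ n ∈ Finset.range (N - 1), pirDot v (pirSto N T n w)
        = pirDot v (fun i => pirIdx w (T * n + i)) := by
      intro n hn
      congr 1
      funext i
      unfold pirSto
      rw [if_pos (Finset.mem_range.mp hn)]
    rw [Finset.sum_congr rfl hdata]
    have hpar : pirSto N T (N - 1) w
        = fun i : Fin T => ∑ j ∈ Finset.range (N - 1), pirIdx w (T * j + (i : ℕ)) := by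
      funext i; unfold pirSto; rw [if_neg (by omega)]
    rw [hpar]
    have hswap : ∑ n ∈ Finset.range (N - 1), pirDot v (fun i => pirIdx w (T * n + i))
        = pirDot v (fun i : Fin T => ∑ j ∈ Finset.range (N - 1), pirIdx w (T * j + (i : ℕ))) := by
      unfold pirDot
      rw [Finset.sum_comm]
      exact Finset.sum_congr rfl (fun i _ => by rw [Finset.mul_sum])
    rw [hswap]
    exact CharTwo.add_self_eq_zero _
  rw [h1, zero_add]
  have hkT : k.val / T < N - 1 := by
    rw [Nat.div_lt_iff_lt_mul (by omega)]
    calc k.val < T * (N - 1) := k.isLt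
      _ = (N - 1) * T := mul_comm _ _
  rw [Finset.sum_eq_single_of_mem (⟨k.val / T, by omega⟩ : Fin N) (Finset.mem_univ _)]
  · unfold pirQv
    rw [if_pos rfl]
    rw [pirDot_delta (k.val % T) (Nat.mod_lt _ (by omega))]
    unfold pirSto
    rw [if_pos hkT]
    unfold pirIdx
    have hdm : T * (k.val / T) + k.val % T = k.val := Nat.div_add_mod k.val T
    simp only [Fin.val_mk]
    rw [dif_pos (by omega)]
    congr 1
    apply Fin.ext
    simp [hdm]
  · intro n _ hn
    unfold pirQv
    rw [if_neg, pirDot_zero_left]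
    intro hv
    exact hn (Fin.ext (by simpa using hv))

lemma zmod2_eq_one_of_ne_zero : ∀ x : ZMod 2, x ≠ 0 → x = 1 := by decide

/-- Fiber count of the answer map for a nonzero query vector. -/
lemma pir_cnt_ne (N T : ℕ) (hN : 2 ≤ N) (hT : 1 ≤ T) (n : ℕ) (q₀ : Fin T → ZMod 2)
    (hq : q₀ ≠ 0) (a : ZMod 2) :
    (Finset.univ.filter
        (fun w : Fin (T * (N - 1)) → ZMod 2 => pirDot q₀ (pirSto N T n w) = a)).card * 2
      = 2 ^ (T * (N - 1)) := by
  have h2 : Fintype.card (ZMod 2) = 2 := ZMod.card 2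
  have hΩ : Fintype.card (Fin (T * (N - 1)) → ZMod 2) = 2 ^ (T * (N - 1)) := by
    rw [Fintype.card_fun]; simp [ZMod.card]
  have htrans : ∀ t t' : ZMod 2, ∃ g : (Fin (T * (N - 1)) → ZMod 2) ≃ (Fin (T * (N - 1)) → ZMod 2),
      ∀ w, pirDot q₀ (pirSto N T n w) = t → pirDot q₀ (pirSto N T n (g w)) = t' := by
    intro t t'
    obtain ⟨i, hi⟩ := Function.ne_iff.mp hq
    have hi1 : q₀ i = 1 := zmod2_eq_one_of_ne_zero _ hi
    obtain ⟨d, hd⟩ := pirSto_surj N T hN hT n (fun j => if j = i then t' - t else 0)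
    refine ⟨Equiv.addRight d, fun w hw => ?_⟩
    show pirDot q₀ (pirSto N T n (w + d)) = t'
    rw [pirSto_add, pirDot_add_right, hw, hd]
    have hdot : pirDot q₀ (fun j => if j = i then t' - t else 0) = t' - t := by
      unfold pirDot
      rw [Finset.sum_eq_single i]
      · beta_reduce; rw [if_pos rfl, hi1, one_mul]
      · intro j _ hj; beta_reduce; rw [if_neg hj, mul_zero]
      · simp
    rw [hdot]; ring
  have hfc := fiber_card_eq (fun w : Fin (T * (N - 1)) → ZMod 2 => pirDot q₀ (pirSto N T n w))
    htrans a
  rw [h2, hΩ] at hfc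
  convert hfc

/-- Entropy of the pair (answer of server `n`, key), for an arbitrary constant query
shift `c` at this server. -/
lemma pir_entA (N T : ℕ) (hN : 2 ≤ N) (hT : 1 ≤ T) (n : ℕ) (c : Fin T → ZMod 2) :
    ent (fun _ => ((Fintype.card ((Fin (T * (N - 1)) → ZMod 2) × (Fin T → ZMod 2)) : ℝ))⁻¹)
      (fun ω : (Fin (T * (N - 1)) → ZMod 2) × (Fin T → ZMod 2) =>
        (pirDot (ω.2 + c) (pirSto N T n ω.1), ω.2))
    = (((2:ℝ)^T - 1) * (T + 1) + T) * ((2:ℝ)^T)⁻¹ * Real.log 2 := by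
  have hK1 : 1 ≤ T * (N - 1) := by
    have := Nat.mul_le_mul hT (show 1 ≤ N - 1 by omega); simpa using this
  have hΩK : Fintype.card (Fin (T * (N - 1)) → ZMod 2) = 2 ^ (T * (N - 1)) := by
    rw [Fintype.card_fun]; simp [ZMod.card]
  have hΩT : Fintype.card (Fin T → ZMod 2) = 2 ^ T := by
    rw [Fintype.card_fun]; simp [ZMod.card]
  have hcard : (Fintype.card ((Fin (T * (N - 1)) → ZMod 2) × (Fin T → ZMod 2)) : ℝ)
      = 2 ^ (T * (N - 1)) * 2 ^ T := by
    rw [Fintype.card_prod, hΩK, hΩT]; push_cast; ring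
  have h2Kne : ((2:ℝ) ^ (T * (N - 1))) ≠ 0 := by positivity
  have h2Tne : ((2:ℝ) ^ T) ≠ 0 := by positivity
  rw [ent_eq_sum_univ, Fintype.sum_prod_type_right]
  have hprob : ∀ (v₀ : Fin T → ZMod 2) (a : ZMod 2),
      prob (fun _ => ((Fintype.card ((Fin (T * (N - 1)) → ZMod 2) × (Fin T → ZMod 2)) : ℝ))⁻¹)
        (fun ω : (Fin (T * (N - 1)) → ZMod 2) × (Fin T → ZMod 2) =>
          (pirDot (ω.2 + c) (pirSto N T n ω.1), ω.2)) (a, v₀)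
      = ((Finset.univ.filter
            (fun w : Fin (T * (N - 1)) → ZMod 2 => pirDot (v₀ + c) (pirSto N T n w) = a)).card : ℝ)
          * (Fintype.card ((Fin (T * (N - 1)) → ZMod 2) × (Fin T → ZMod 2)) : ℝ)⁻¹ := by
    intro v₀ a
    have h := prob_pair_snd (fun v w => pirDot (v + c) (pirSto N T n w)) a v₀
    convert h
  rw [Finset.sum_congr rfl (fun v₀ _ => Finset.sum_congr rfl (fun a _ => by rw [hprob v₀ a]))]
  have hre : (∑ v₀ : Fin T → ZMod 2, ∑ a : ZMod 2, Real.negMulLog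
        (((Finset.univ.filter
            (fun w : Fin (T * (N - 1)) → ZMod 2 => pirDot (v₀ + c) (pirSto N T n w) = a)).card : ℝ)
          * (Fintype.card ((Fin (T * (N - 1)) → ZMod 2) × (Fin T → ZMod 2)) : ℝ)⁻¹))
      = ∑ q₀ : Fin T → ZMod 2, ∑ a : ZMod 2, Real.negMulLog
        (((Finset.univ.filter
            (fun w : Fin (T * (N - 1)) → ZMod 2 => pirDot q₀ (pirSto N T n w) = a)).card : ℝ)
          * (Fintype.card ((Fin (T * (N - 1)) → ZMod 2) × (Fin T → ZMod 2)) : ℝ)⁻¹) := by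
    apply Fintype.sum_equiv (Equiv.addRight c)
    intro v₀
    rfl
  rw [hre]
  rw [← Finset.sum_erase_add _ _ (Finset.mem_univ (0 : Fin T → ZMod 2))]
  have hbody0 : (∑ a : ZMod 2, Real.negMulLog
        (((Finset.univ.filter
            (fun w : Fin (T * (N - 1)) → ZMod 2 => pirDot 0 (pirSto N T n w) = a)).card : ℝ)
          * (Fintype.card ((Fin (T * (N - 1)) → ZMod 2) × (Fin T → ZMod 2)) : ℝ)⁻¹))
      = Real.negMulLog (((2:ℝ)^T)⁻¹) := by
    rw [zmod2_sum]
    have e0 : (Finset.univ.filter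
        (fun w : Fin (T * (N - 1)) → ZMod 2 => pirDot 0 (pirSto N T n w) = 0))
        = Finset.univ := by
      apply Finset.filter_true_of_mem; intro w _; rw [pirDot_zero_left]
    have e1 : (Finset.univ.filter
        (fun w : Fin (T * (N - 1)) → ZMod 2 => pirDot 0 (pirSto N T n w) = 1))
        = ∅ := by
      apply Finset.filter_false_of_mem; intro w _; rw [pirDot_zero_left]; decide
    rw [e0, e1]
    rw [Finset.card_univ, hΩK, hcard]
    have harith : ((2:ℝ) ^ (T * (N - 1)) : ℝ) * ((2:ℝ) ^ (T * (N - 1)) * 2 ^ T)⁻¹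
        = ((2:ℝ)^T)⁻¹ := by
      field_simp
    rw [show ((2 ^ (T * (N - 1)) : ℕ) : ℝ) = (2:ℝ) ^ (T * (N - 1)) by push_cast; ring, harith]
    simp [Real.negMulLog_zero]
  rw [hbody0]
  have hbodyne : ∀ q₀ ∈ (Finset.univ : Finset (Fin T → ZMod 2)).erase 0,
      (∑ a : ZMod 2, Real.negMulLog
        (((Finset.univ.filter
            (fun w : Fin (T * (N - 1)) → ZMod 2 => pirDot q₀ (pirSto N T n w) = a)).card : ℝ)
          * (Fintype.card ((Fin (T * (N - 1)) → ZMod 2) × (Fin T → ZMod 2)) : ℝ)⁻¹))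
      = 2 * Real.negMulLog (((2:ℝ)^(T+1))⁻¹) := by
    intro q₀ hq₀
    have hq : q₀ ≠ 0 := (Finset.mem_erase.mp hq₀).1
    have hcnt : ∀ a : ZMod 2,
        ((Finset.univ.filter
            (fun w : Fin (T * (N - 1)) → ZMod 2 => pirDot q₀ (pirSto N T n w) = a)).card : ℝ)
          * (Fintype.card ((Fin (T * (N - 1)) → ZMod 2) × (Fin T → ZMod 2)) : ℝ)⁻¹
        = ((2:ℝ)^(T+1))⁻¹ := by
      intro a
      have h := pir_cnt_ne N T hN hT n q₀ hq a
      have hcast : ((Finset.univ.filter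
            (fun w : Fin (T * (N - 1)) → ZMod 2 => pirDot q₀ (pirSto N T n w) = a)).card : ℝ) * 2
          = (2:ℝ) ^ (T * (N - 1)) := by exact_mod_cast congrArg (Nat.cast : ℕ → ℝ) h
      have hx : ((Finset.univ.filter
            (fun w : Fin (T * (N - 1)) → ZMod 2 => pirDot q₀ (pirSto N T n w) = a)).card : ℝ)
          = (2:ℝ) ^ (T * (N - 1)) / 2 := by linarith
      rw [hx, hcard, pow_succ]
      field_simp
    rw [zmod2_sum, hcnt 0, hcnt 1]
    ring
  rw [Finset.sum_congr rfl hbodyne, Finset.sum_const,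
    Finset.card_erase_of_mem (Finset.mem_univ _), Finset.card_univ, hΩT]
  rw [negMulLog_inv_pow, negMulLog_inv_pow, nsmul_eq_mul]
  have hcast2 : ((2 ^ T - 1 : ℕ) : ℝ) = (2:ℝ)^T - 1 := by
    have h1 : (1:ℕ) ≤ 2 ^ T := Nat.one_le_two_pow
    push_cast [h1]
    ring
  rw [hcast2]
  rw [pow_succ]
  push_cast
  field_simp


/- ===================== The scheme of Construction B ===================== -/

/-- Construction B as a `PIRScheme`. -/
noncomputable def pirSchemeB (N T : ℕ) (hN : 2 ≤ N) (hT : 1 ≤ T) :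
    PIRScheme N (T * (N - 1)) where
  Ω := (Fin (T * (N - 1)) → ZMod 2) × (Fin T → ZMod 2)
  finΩ := inferInstance
  Msg := ZMod 2
  Sto := Fin T → ZMod 2
  Qry := Fin T → ZMod 2
  Ans := ZMod 2
  Key := Fin T → ZMod 2
  p := fun _ => ((Fintype.card ((Fin (T * (N - 1)) → ZMod 2) × (Fin T → ZMod 2)) : ℝ))⁻¹
  p_nonneg := fun _ => by positivity
  p_sum := by
    rw [Finset.sum_const, Finset.card_univ, nsmul_eq_mul]
    exact mul_inv_cancel₀ (Nat.cast_ne_zero.mpr Fintype.card_ne_zero)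
  L := Real.log 2
  L_pos := Real.log_pos (by norm_num)
  W := fun k ω => ω.1 k
  S := fun n ω => pirSto N T n.val ω.1
  F := fun ω => ω.2
  Q := fun k n ω => ω.2 + pirQv N T k n.val
  A := fun k n ω => pirDot (ω.2 + pirQv N T k n.val) (pirSto N T n.val ω.1)
  W_indep := by
    intro w
    have hjoint : prob
        (fun _ => ((Fintype.card ((Fin (T * (N - 1)) → ZMod 2) × (Fin T → ZMod 2)) : ℝ))⁻¹)
        (fun ω : (Fin (T * (N - 1)) → ZMod 2) × (Fin T → ZMod 2) => (fun k => ω.1 k)) w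
        = (Fintype.card (Fin (T * (N - 1)) → ZMod 2) : ℝ)⁻¹ := by
      apply prob_uniform_of_trans
      intro t t'
      refine ⟨Equiv.addRight ((t' - t, 0) :
        (Fin (T * (N - 1)) → ZMod 2) × (Fin T → ZMod 2)), fun ω hω => ?_⟩
      have hω' : ω.1 = t := hω
      show ω.1 + (t' - t) = t'
      rw [hω']; abel
    have hsingle : ∀ k : Fin (T * (N - 1)),
        prob (fun _ => ((Fintype.card ((Fin (T * (N - 1)) → ZMod 2) × (Fin T → ZMod 2)) : ℝ))⁻¹)
          (fun ω : (Fin (T * (N - 1)) → ZMod 2) × (Fin T → ZMod 2) => ω.1 k) (w k)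
        = (Fintype.card (ZMod 2) : ℝ)⁻¹ := by
      intro k
      apply prob_uniform_of_trans
      intro t t'
      refine ⟨Equiv.addRight (((fun κ => if κ = k then t' - t else 0), 0) :
        (Fin (T * (N - 1)) → ZMod 2) × (Fin T → ZMod 2)), fun ω hω => ?_⟩
      show ω.1 k + (if k = k then t' - t else 0) = t'
      rw [if_pos rfl, hω]; ring
    rw [hjoint, Finset.prod_congr rfl (fun k _ => hsingle k)]
    rw [Finset.prod_const, Finset.card_univ, Fintype.card_fin, Fintype.card_fun, ZMod.card,
      Fintype.card_fin]
    push_cast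
    rw [inv_pow]
  W_ent := by
    intro k
    have h : ent
        (fun _ => ((Fintype.card ((Fin (T * (N - 1)) → ZMod 2) × (Fin T → ZMod 2)) : ℝ))⁻¹)
        (fun ω : (Fin (T * (N - 1)) → ZMod 2) × (Fin T → ZMod 2) => ω.1 k)
        = Real.log (Fintype.card (ZMod 2)) := by
      apply ent_of_trans
      intro t t'
      refine ⟨Equiv.addRight (((fun κ => if κ = k then t' - t else 0), 0) :
        (Fin (T * (N - 1)) → ZMod 2) × (Fin T → ZMod 2)), fun ω hω => ?_⟩
      show ω.1 k + (if k = k then t' - t else 0) = t'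
      rw [if_pos rfl, hω]; ring
    rw [h, ZMod.card]
    norm_num
  F_indep := by
    intro f w
    have hpair : prob
        (fun _ => ((Fintype.card ((Fin (T * (N - 1)) → ZMod 2) × (Fin T → ZMod 2)) : ℝ))⁻¹)
        (fun ω : (Fin (T * (N - 1)) → ZMod 2) × (Fin T → ZMod 2) => (ω.2, fun k => ω.1 k)) (f, w)
        = (Fintype.card ((Fin T → ZMod 2) × (Fin (T * (N - 1)) → ZMod 2)) : ℝ)⁻¹ := by
      apply prob_uniform_of_trans
      intro t t'
      refine ⟨Equiv.addRight ((t'.2 - t.2, t'.1 - t.1) :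
        (Fin (T * (N - 1)) → ZMod 2) × (Fin T → ZMod 2)), fun ω hω => ?_⟩
      have h1 : ω.2 = t.1 := congrArg Prod.fst hω
      have h2 : ω.1 = t.2 := congrArg Prod.snd hω
      show (ω.2 + (t'.1 - t.1), ω.1 + (t'.2 - t.2)) = t'
      rw [h1, h2]
      refine Prod.ext ?_ ?_
      · show t.1 + (t'.1 - t.1) = t'.1
        rw [add_comm, sub_add_cancel]
      · show t.2 + (t'.2 - t.2) = t'.2
        rw [add_comm, sub_add_cancel]
    have hF : prob
        (fun _ => ((Fintype.card ((Fin (T * (N - 1)) → ZMod 2) × (Fin T → ZMod 2)) : ℝ))⁻¹)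
        (fun ω : (Fin (T * (N - 1)) → ZMod 2) × (Fin T → ZMod 2) => ω.2) f
        = (Fintype.card (Fin T → ZMod 2) : ℝ)⁻¹ := by
      apply prob_uniform_of_trans
      intro t t'
      refine ⟨Equiv.addRight ((0, t' - t) :
        (Fin (T * (N - 1)) → ZMod 2) × (Fin T → ZMod 2)), fun ω hω => ?_⟩
      show ω.2 + (t' - t) = t'
      rw [hω]; abel
    have hW : prob
        (fun _ => ((Fintype.card ((Fin (T * (N - 1)) → ZMod 2) × (Fin T → ZMod 2)) : ℝ))⁻¹)
        (fun ω : (Fin (T * (N - 1)) → ZMod 2) × (Fin T → ZMod 2) => (fun k => ω.1 k)) w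
        = (Fintype.card (Fin (T * (N - 1)) → ZMod 2) : ℝ)⁻¹ := by
      apply prob_uniform_of_trans
      intro t t'
      refine ⟨Equiv.addRight ((t' - t, 0) :
        (Fin (T * (N - 1)) → ZMod 2) × (Fin T → ZMod 2)), fun ω hω => ?_⟩
      have hω' : ω.1 = t := hω
      show ω.1 + (t' - t) = t'
      rw [hω']; abel
    rw [hpair, hF, hW, Fintype.card_prod, Nat.cast_mul, mul_inv]
  S_det := fun n => ⟨fun w => pirSto N T n.val w, fun _ => rfl⟩
  Q_det := fun k n => ⟨fun f => f + pirQv N T k n.val, fun _ => rfl⟩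
  A_det := fun n => ⟨fun q s => pirDot q s, fun _ _ => rfl⟩
  correct := fun k => ⟨fun ans _ => ∑ n : Fin N, ans n, fun ω =>
    pir_correct N T hN hT k ω.1 ω.2⟩
  privacy := by
    intro n k k' q
    have hgen : ∀ k'' : Fin (T * (N - 1)),
        prob (fun _ => ((Fintype.card ((Fin (T * (N - 1)) → ZMod 2) × (Fin T → ZMod 2)) : ℝ))⁻¹)
          (fun ω : (Fin (T * (N - 1)) → ZMod 2) × (Fin T → ZMod 2) =>
            ω.2 + pirQv N T k'' n.val) q
        = (Fintype.card (Fin T → ZMod 2) : ℝ)⁻¹ := by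
      intro k''
      apply prob_uniform_of_trans
      intro t t'
      refine ⟨Equiv.addRight ((0, t' - t) :
        (Fin (T * (N - 1)) → ZMod 2) × (Fin T → ZMod 2)), fun ω hω => ?_⟩
      show (ω.2 + (t' - t)) + pirQv N T k'' n.val = t'
      rw [add_right_comm, hω]; abel
    rw [hgen k, hgen k']

set_option maxHeartbeats 1000000 in
/-- Construction B: for all `N ≥ 2`, `T ≥ 1` and `K = T·(N-1)`, there is an `(N,K)` PIR
scheme with binary messages (`L = log 2`, i.e. one bit in natural-log units) whose costs
satisfy `α ≤ T` and `β ≤ (2^T - 1)/2^T`. -/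
theorem stmt18 (N T : ℕ) (hN : 2 ≤ N) (hT : 1 ≤ T) :
    ∃ s : PIRScheme N (T * (N - 1)), s.L = Real.log 2 ∧
      s.alpha ≤ (T : ℝ) ∧
      s.betaAt ⟨0, Nat.mul_pos hT (by omega)⟩ ≤ ((2 : ℝ) ^ T - 1) / 2 ^ T := by
  have hlog2 : 0 < Real.log 2 := Real.log_pos (by norm_num)
  have hl0 : Real.log 2 ≠ 0 := ne_of_gt hlog2
  have hN0 : ((N : ℝ)) ≠ 0 := by
    have : (0:ℝ) < N := by exact_mod_cast (by omega : 0 < N)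
    exact ne_of_gt this
  have hΩT : Fintype.card (Fin T → ZMod 2) = 2 ^ T := by
    rw [Fintype.card_fun]; simp [ZMod.card]
  have h2Tne : ((2:ℝ) ^ T) ≠ 0 := by positivity
  refine ⟨pirSchemeB N T hN hT, rfl, ?_, ?_⟩
  -- storage cost
  · rw [PIRScheme.alpha]
    have hent : ∀ n : Fin N,
        ent (pirSchemeB N T hN hT).p ((pirSchemeB N T hN hT).S n)
          = (T : ℝ) * Real.log 2 := by
      intro n
      have htrans : ∀ t t' : Fin T → ZMod 2,
          ∃ g : ((Fin (T * (N - 1)) → ZMod 2) × (Fin T → ZMod 2))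
              ≃ ((Fin (T * (N - 1)) → ZMod 2) × (Fin T → ZMod 2)),
            ∀ ω, pirSto N T n.val ω.1 = t → pirSto N T n.val (g ω).1 = t' := by
        intro t t'
        obtain ⟨d, hd⟩ := pirSto_surj N T hN hT n.val (t' - t)
        refine ⟨Equiv.addRight ((d, 0) :
          (Fin (T * (N - 1)) → ZMod 2) × (Fin T → ZMod 2)), fun ω hω => ?_⟩
        show pirSto N T n.val (ω.1 + d) = t'
        rw [pirSto_add, hω, hd, add_comm, sub_add_cancel]
      have h := ent_of_trans
        (fun ω : (Fin (T * (N - 1)) → ZMod 2) × (Fin T → ZMod 2) => pirSto N T n.val ω.1)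
        htrans
      have h2 : ent (pirSchemeB N T hN hT).p ((pirSchemeB N T hN hT).S n)
          = Real.log (Fintype.card (Fin T → ZMod 2)) := h
      rw [h2, hΩT, Nat.cast_pow, Real.log_pow]
      norm_num
    rw [Finset.sum_congr rfl (fun n _ => hent n), Finset.sum_const, Finset.card_univ,
      Fintype.card_fin, nsmul_eq_mul,
      show (pirSchemeB N T hN hT).L = Real.log 2 from rfl]
    apply le_of_eq
    field_simp
  -- download cost
  · rw [PIRScheme.betaAt]
    rw [show (pirSchemeB N T hN hT).p
        = (fun _ : (Fin (T * (N - 1)) → ZMod 2) × (Fin T → ZMod 2) =>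
            ((Fintype.card ((Fin (T * (N - 1)) → ZMod 2) × (Fin T → ZMod 2)) : ℝ))⁻¹) from rfl,
      show (pirSchemeB N T hN hT).A
        = (fun k n ω => pirDot (ω.2 + pirQv N T k n.val) (pirSto N T n.val ω.1)) from rfl,
      show (pirSchemeB N T hN hT).Q
        = (fun k n ω => ω.2 + pirQv N T k n.val) from rfl,
      show (pirSchemeB N T hN hT).L = Real.log 2 from rfl]
    beta_reduce
    have hcond : ∀ n : Fin N,
        condEnt (fun _ : (Fin (T * (N - 1)) → ZMod 2) × (Fin T → ZMod 2) =>
            ((Fintype.card ((Fin (T * (N - 1)) → ZMod 2) × (Fin T → ZMod 2)) : ℝ))⁻¹)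
          (fun ω : (Fin (T * (N - 1)) → ZMod 2) × (Fin T → ZMod 2) =>
            pirDot (ω.2 + pirQv N T ⟨0, Nat.mul_pos hT (by omega)⟩ n.val)
              (pirSto N T n.val ω.1))
          (fun ω : (Fin (T * (N - 1)) → ZMod 2) × (Fin T → ZMod 2) =>
            (fun n' : Fin N => ω.2 + pirQv N T ⟨0, Nat.mul_pos hT (by omega)⟩ n'.val))
        = (((2:ℝ)^T - 1) * (T + 1) + T) * ((2:ℝ)^T)⁻¹ * Real.log 2
            - (T : ℝ) * Real.log 2 := by
      intro n
      rw [condEnt]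
      have hinj : Function.Injective (fun v : Fin T → ZMod 2 =>
          (fun n' : Fin N => v + pirQv N T ⟨0, Nat.mul_pos hT (by omega)⟩ n'.val)) := by
        intro v v' hvv
        have := congrFun hvv ⟨0, by omega⟩
        simpa using this
      have h1 : ent (fun _ : (Fin (T * (N - 1)) → ZMod 2) × (Fin T → ZMod 2) =>
            ((Fintype.card ((Fin (T * (N - 1)) → ZMod 2) × (Fin T → ZMod 2)) : ℝ))⁻¹)
          (fun ω : (Fin (T * (N - 1)) → ZMod 2) × (Fin T → ZMod 2) =>
            (pirDot (ω.2 + pirQv N T ⟨0, Nat.mul_pos hT (by omega)⟩ n.val)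
              (pirSto N T n.val ω.1),
             (fun n' : Fin N => ω.2 + pirQv N T ⟨0, Nat.mul_pos hT (by omega)⟩ n'.val)))
          = ent (fun _ : (Fin (T * (N - 1)) → ZMod 2) × (Fin T → ZMod 2) =>
            ((Fintype.card ((Fin (T * (N - 1)) → ZMod 2) × (Fin T → ZMod 2)) : ℝ))⁻¹)
            (fun ω : (Fin (T * (N - 1)) → ZMod 2) × (Fin T → ZMod 2) =>
              (pirDot (ω.2 + pirQv N T ⟨0, Nat.mul_pos hT (by omega)⟩ n.val)
                (pirSto N T n.val ω.1), ω.2)) :=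
        ent_comp_inj _
          (fun ω : (Fin (T * (N - 1)) → ZMod 2) × (Fin T → ZMod 2) =>
            (pirDot (ω.2 + pirQv N T ⟨0, Nat.mul_pos hT (by omega)⟩ n.val)
              (pirSto N T n.val ω.1), ω.2))
          (Prod.map id (fun v : Fin T → ZMod 2 =>
            (fun n' : Fin N => v + pirQv N T ⟨0, Nat.mul_pos hT (by omega)⟩ n'.val)))
          (Function.Injective.prodMap Function.injective_id hinj)
      have h2 : ent (fun _ : (Fin (T * (N - 1)) → ZMod 2) × (Fin T → ZMod 2) =>
            ((Fintype.card ((Fin (T * (N - 1)) → ZMod 2) × (Fin T → ZMod 2)) : ℝ))⁻¹)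
          (fun ω : (Fin (T * (N - 1)) → ZMod 2) × (Fin T → ZMod 2) =>
            (fun n' : Fin N => ω.2 + pirQv N T ⟨0, Nat.mul_pos hT (by omega)⟩ n'.val))
          = ent (fun _ : (Fin (T * (N - 1)) → ZMod 2) × (Fin T → ZMod 2) =>
            ((Fintype.card ((Fin (T * (N - 1)) → ZMod 2) × (Fin T → ZMod 2)) : ℝ))⁻¹)
            (fun ω : (Fin (T * (N - 1)) → ZMod 2) × (Fin T → ZMod 2) => ω.2) :=
        ent_comp_inj _
          (fun ω : (Fin (T * (N - 1)) → ZMod 2) × (Fin T → ZMod 2) => ω.2)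
          (fun v : Fin T → ZMod 2 =>
            (fun n' : Fin N => v + pirQv N T ⟨0, Nat.mul_pos hT (by omega)⟩ n'.val))
          hinj
      have htransF : ∀ t t' : Fin T → ZMod 2,
          ∃ g : ((Fin (T * (N - 1)) → ZMod 2) × (Fin T → ZMod 2))
              ≃ ((Fin (T * (N - 1)) → ZMod 2) × (Fin T → ZMod 2)),
            ∀ ω : (Fin (T * (N - 1)) → ZMod 2) × (Fin T → ZMod 2),
              ω.2 = t → (g ω).2 = t' := by
        intro t t'
        refine ⟨Equiv.addRight ((0, t' - t) :
          (Fin (T * (N - 1)) → ZMod 2) × (Fin T → ZMod 2)), fun ω hω => ?_⟩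
        show ω.2 + (t' - t) = t'
        rw [hω, add_comm, sub_add_cancel]
      have h3 : ent (fun _ : (Fin (T * (N - 1)) → ZMod 2) × (Fin T → ZMod 2) =>
            ((Fintype.card ((Fin (T * (N - 1)) → ZMod 2) × (Fin T → ZMod 2)) : ℝ))⁻¹)
          (fun ω : (Fin (T * (N - 1)) → ZMod 2) × (Fin T → ZMod 2) => ω.2)
          = Real.log (Fintype.card (Fin T → ZMod 2)) :=
        ent_of_trans _ htransF
      rw [h1, h2, h3, hΩT,
        pir_entA N T hN hT n.val (pirQv N T ⟨0, Nat.mul_pos hT (by omega)⟩ n.val),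
        Nat.cast_pow, Real.log_pow]
      norm_num
    show (1 / ((N:ℝ) * Real.log 2)) * (∑ n : Fin N,
        condEnt (fun _ : (Fin (T * (N - 1)) → ZMod 2) × (Fin T → ZMod 2) =>
            ((Fintype.card ((Fin (T * (N - 1)) → ZMod 2) × (Fin T → ZMod 2)) : ℝ))⁻¹)
          (fun ω : (Fin (T * (N - 1)) → ZMod 2) × (Fin T → ZMod 2) =>
            pirDot (ω.2 + pirQv N T ⟨0, Nat.mul_pos hT (by omega)⟩ n.val)
              (pirSto N T n.val ω.1))
          (fun ω : (Fin (T * (N - 1)) → ZMod 2) × (Fin T → ZMod 2) =>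
            (fun n' : Fin N => ω.2 + pirQv N T ⟨0, Nat.mul_pos hT (by omega)⟩ n'.val)))
      ≤ ((2:ℝ)^T - 1) / 2^T
    simp only [hcond, Finset.sum_const, Finset.card_univ, Fintype.card_fin, nsmul_eq_mul]
    apply le_of_eq
    field_simp
    ring
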